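/- For every n ≥ 1: ∫_ℂ exp(-n(|z|² - 1 - log(|z|²))) dz = 2π ∫_0^∞ e^{-n(ρ²-1-log ρ²)} ρ dρ, and this tends to 0 at rate n^{-1/2}; more precisely √n · ∫_ℂ exp(-n(|z|²-1-log|z|²)) dz → 2π·√(2π)/2 = π√(2π) as n → ∞. -/

import Mathlib

open MeasureTheory Filter

open Real Set in
lemma polar_aux (f : ℝ → ℝ) :
    ∫ z : ℂ, f (‖z‖) = 2 * π * ∫ x in Ioi (0 : ℝ), f x * x := by
  calc ∫ z : ℂ, f (‖z‖)
      = ∫ p in Ioi (0 : ℝ) ×ˢ Ioo (-π) π, p.1 * f |p.1| := by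
        rw [← Complex.integral_comp_polarCoord_symm, polarCoord_target]
        simp_rw [Complex.norm_polarCoord_symm, smul_eq_mul]
    _ = (∫ x in Ioi (0 : ℝ), x * f |x|) * ∫ _ in Ioo (-π) π, (1 : ℝ) := by
        rw [← setIntegral_prod_mul, Measure.volume_eq_prod]
        simp_rw [mul_one]
    _ = 2 * π * ∫ x in Ioi (0 : ℝ), x * f |x| := by
        simp_rw [integral_const, measureReal_restrict_apply_univ,
          Real.volume_real_Ioo, sub_neg_eq_add, ← two_mul, max_eq_left (by positivity : 0 ≤ 2 * π),
          smul_eq_mul, mul_one, mul_comm]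
    _ = 2 * π * ∫ x in Ioi (0 : ℝ), f x * x := by
        congr 1
        refine setIntegral_congr_fun measurableSet_Ioi (fun x hx => ?_)
        rw [abs_eq_self.mpr (le_of_lt hx)]; ring

open Real Set in
lemma key (n : ℕ) (hn : 1 ≤ n) :
    ∫ x in Ioi (0 : ℝ), Real.exp (-(n : ℝ) * (x ^ 2 - 1 - Real.log (x ^ 2))) * x
      = Real.exp n * n.factorial / (2 * (n : ℝ) ^ (n + 1)) := by
  have hn0 : (0 : ℝ) < n := by exact_mod_cast hn
  calc ∫ x in Ioi (0 : ℝ), Real.exp (-(n : ℝ) * (x ^ 2 - 1 - Real.log (x ^ 2))) * x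
      = ∫ x in Ioi (0 : ℝ), Real.exp n *
          (x ^ (((2 * n + 1 : ℕ) : ℝ)) * Real.exp (-(n : ℝ) * x ^ (2 : ℝ))) := by
        refine setIntegral_congr_fun measurableSet_Ioi (fun x hx => ?_)
        rw [mem_Ioi] at hx
        have hx2 : (0 : ℝ) < x ^ 2 := by positivity
        rw [show -(n : ℝ) * (x ^ 2 - 1 - Real.log (x ^ 2))
            = (n : ℝ) + (n : ℝ) * Real.log (x ^ 2) + (-(n : ℝ) * x ^ 2) by ring,
          Real.exp_add, Real.exp_add]
        have e1 : Real.exp ((n : ℝ) * Real.log (x ^ 2)) = (x ^ 2) ^ (n : ℕ) := by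
          rw [mul_comm, Real.exp_mul, Real.exp_log hx2, Real.rpow_natCast]
        rw [e1, Real.rpow_natCast x (2 * n + 1),
          show (2 : ℝ) = ((2 : ℕ) : ℝ) by norm_num, Real.rpow_natCast]
        ring
    _ = Real.exp n * ((n : ℝ) ^ (-(((2 * n + 1 : ℕ) : ℝ) + 1) / 2) * (1 / 2) *
          Real.Gamma ((((2 * n + 1 : ℕ) : ℝ) + 1) / 2)) := by
        rw [integral_const_mul, integral_rpow_mul_exp_neg_mul_rpow two_pos
          (neg_one_lt_zero.trans_le (Nat.cast_nonneg _)) hn0]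
    _ = Real.exp n * n.factorial / (2 * (n : ℝ) ^ (n + 1)) := by
        have h1 : ((((2 * n + 1 : ℕ) : ℝ)) + 1) / 2 = (n : ℝ) + 1 := by push_cast; ring
        have h2 : -((((2 * n + 1 : ℕ) : ℝ)) + 1) / 2 = -(((n + 1 : ℕ) : ℝ)) := by
          push_cast; ring
        rw [h1, h2, Real.rpow_neg hn0.le, Real.rpow_natCast, Real.Gamma_nat_eq_factorial]
        have : ((n : ℝ)) ^ (n + 1) ≠ 0 := by positivity
        field_simp

theorem stmt_16 :
    (∀ n : ℕ, 1 ≤ n →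
      ∫ z : ℂ, Real.exp (-(n : ℝ) * (‖z‖ ^ 2 - 1 - Real.log (‖z‖ ^ 2))) =
        2 * Real.pi *
          ∫ ρ in Set.Ioi (0 : ℝ), Real.exp (-(n : ℝ) * (ρ ^ 2 - 1 - Real.log (ρ ^ 2))) * ρ) ∧
    Tendsto (fun n : ℕ =>
        Real.sqrt n *
          ∫ z : ℂ, Real.exp (-(n : ℝ) * (‖z‖ ^ 2 - 1 - Real.log (‖z‖ ^ 2))))
      atTop (nhds (Real.pi * Real.sqrt (2 * Real.pi))) := by
  have hpolar : ∀ n : ℕ,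
      ∫ z : ℂ, Real.exp (-(n : ℝ) * (‖z‖ ^ 2 - 1 - Real.log (‖z‖ ^ 2))) =
        2 * Real.pi *
          ∫ ρ in Set.Ioi (0 : ℝ), Real.exp (-(n : ℝ) * (ρ ^ 2 - 1 - Real.log (ρ ^ 2))) * ρ :=
    fun n => polar_aux (fun r => Real.exp (-(n : ℝ) * (r ^ 2 - 1 - Real.log (r ^ 2))))
  refine ⟨fun n _ => hpolar n, ?_⟩
  have hlim : Tendsto (fun n : ℕ => Real.pi * Real.sqrt 2 * Stirling.stirlingSeq n)
      atTop (nhds (Real.pi * Real.sqrt (2 * Real.pi))) := by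
    have := (Stirling.tendsto_stirlingSeq_sqrt_pi).const_mul (Real.pi * Real.sqrt 2)
    convert this using 2
    rw [mul_assoc, ← Real.sqrt_mul (by norm_num : (0:ℝ) ≤ 2)]
  refine hlim.congr' ?_
  filter_upwards [eventually_ge_atTop 1] with n hn
  have hn0 : (0 : ℝ) < n := by exact_mod_cast hn
  rw [hpolar n, key n hn]
  rw [Stirling.stirlingSeq]
  rw [Real.sqrt_mul (by norm_num : (0:ℝ) ≤ 2), div_pow, Real.exp_one_pow]
  have hsq : Real.sqrt n * Real.sqrt n = (n : ℝ) := Real.mul_self_sqrt hn0.le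
  have hen : Real.exp (n : ℝ) ≠ 0 := Real.exp_ne_zero _
  have hpn : ((n : ℝ)) ^ (n + 1) ≠ 0 := by positivity
  have hsn : Real.sqrt n ≠ 0 := by positivity
  have hs2 : Real.sqrt 2 ≠ 0 := by positivity
  rw [pow_succ, ← hsq]
  field_simp
  ring_nf
  rw [Real.sq_sqrt hn0.le]
  rw [Real.sq_sqrt hn0.le]
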